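/- Let D_i, D_j be domains with joint laws on (X,Y), let L : pred × Y → [0,C] be a bounded loss, and define ε_D(f) = E_D[L(f(X),Y)] for a predictor f. Then ε_{D_j}(f) ≤ ε_{D_i}(f) + √2 · C · d_JS(P_{D_j}^{X,Y}, P_{D_i}^{X,Y}). -/

import Mathlib

open MeasureTheory ProbabilityTheory Real
open scoped ENNReal
open scoped NNReal

/-- Kullback–Leibler divergence (natural log), as a real number. -/
noncomputable def klDiv {α : Type*} [MeasurableSpace α] (P Q : Measure α) : ℝ :=
  ∫ x, Real.log ((P.rnDeriv Q) x).toReal ∂P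

/-- The midpoint (mixture) measure (P + Q)/2. -/
noncomputable def midM {α : Type*} [MeasurableSpace α] (P Q : Measure α) : Measure α :=
  (2⁻¹ : ℝ≥0∞) • (P + Q)

/-- Jensen–Shannon divergence. -/
noncomputable def jsDiv {α : Type*} [MeasurableSpace α] (P Q : Measure α) : ℝ :=
  2⁻¹ * klDiv P (midM P Q) + 2⁻¹ * klDiv Q (midM P Q)

/-- Jensen–Shannon distance. -/
noncomputable def jsDist {α : Type*} [MeasurableSpace α] (P Q : Measure α) : ℝ :=
  Real.sqrt (jsDiv P Q)

/-! ### Auxiliary real-analysis lemmas -/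

lemma logIneq1 {x : ℝ} (hx : 0 < x) : 1 - x⁻¹ ≤ Real.log x := by
  have h := Real.log_le_sub_one_of_pos (inv_pos.2 hx)
  rw [Real.log_inv] at h; linarith

lemma G_hasDeriv {x : ℝ} (hx : 0 < x) :
    HasDerivAt (fun y : ℝ => (y + 1) * Real.log y - 2 * (y - 1))
      (Real.log x + (x + 1) * x⁻¹ - 2) x := by
  have h1 : HasDerivAt (fun y : ℝ => (y + 1) * Real.log y)
      (1 * Real.log x + (x + 1) * x⁻¹) x :=
    ((hasDerivAt_id x).add_const 1).mul (Real.hasDerivAt_log hx.ne')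
  have h2 : HasDerivAt (fun y : ℝ => 2 * (y - 1)) 2 x := by
    simpa using ((hasDerivAt_id x).sub_const 1).const_mul 2
  have := h1.sub h2
  simp only [one_mul] at this
  exact this

lemma G_deriv_nonneg {x : ℝ} (hx : 0 < x) :
    0 ≤ Real.log x + (x + 1) * x⁻¹ - 2 := by
  have h := logIneq1 hx
  have : (x + 1) * x⁻¹ = 1 + x⁻¹ := by field_simp
  rw [this]; linarith

lemma G_nonneg {x : ℝ} (hx : 1 ≤ x) : 0 ≤ (x + 1) * Real.log x - 2 * (x - 1) := by
  set G : ℝ → ℝ := fun y => (y + 1) * Real.log y - 2 * (y - 1) with hG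
  have hmono : MonotoneOn G (Set.Icc 1 x) := by
    apply monotoneOn_of_deriv_nonneg (convex_Icc 1 x)
    · intro y hy
      exact ((G_hasDeriv (lt_of_lt_of_le one_pos hy.1)).continuousAt).continuousWithinAt
    · intro y hy
      rw [interior_Icc] at hy
      exact ((G_hasDeriv (lt_trans one_pos hy.1)).differentiableAt).differentiableWithinAt
    · intro y hy
      rw [interior_Icc] at hy
      rw [(G_hasDeriv (lt_trans one_pos hy.1)).deriv]
      exact G_deriv_nonneg (lt_trans one_pos hy.1)
  have := hmono (Set.left_mem_Icc.2 hx) (Set.right_mem_Icc.2 hx) hx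
  simpa [hG] using this

lemma G_nonpos {x : ℝ} (hx0 : 0 < x) (hx : x ≤ 1) :
    (x + 1) * Real.log x - 2 * (x - 1) ≤ 0 := by
  set G : ℝ → ℝ := fun y => (y + 1) * Real.log y - 2 * (y - 1) with hG
  have hmono : MonotoneOn G (Set.Icc x 1) := by
    apply monotoneOn_of_deriv_nonneg (convex_Icc x 1)
    · intro y hy
      exact ((G_hasDeriv (lt_of_lt_of_le hx0 hy.1)).continuousAt).continuousWithinAt
    · intro y hy
      rw [interior_Icc] at hy
      exact ((G_hasDeriv (lt_trans hx0 hy.1)).differentiableAt).differentiableWithinAt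
    · intro y hy
      rw [interior_Icc] at hy
      rw [(G_hasDeriv (lt_trans hx0 hy.1)).deriv]
      exact G_deriv_nonneg (lt_trans hx0 hy.1)
  have := hmono (Set.left_mem_Icc.2 hx) (Set.right_mem_Icc.2 hx) hx
  simpa [hG] using this

noncomputable def Fk (x : ℝ) : ℝ := 2 * (x + 2) * (x * Real.log x - x + 1) - 3 * (x - 1) ^ 2

lemma Fk_hasDeriv {x : ℝ} (hx : 0 < x) :
    HasDerivAt Fk (4 * ((x + 1) * Real.log x - 2 * (x - 1))) x := by
  have hlog := Real.hasDerivAt_log hx.ne'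
  have h1 : HasDerivAt (fun y : ℝ => y * Real.log y - y + 1)
      (Real.log x + x * x⁻¹ - 1) x := by
    have := ((hasDerivAt_id x).mul hlog)
    simpa [one_mul] using (this.sub (hasDerivAt_id x)).add_const 1
  have h2 : HasDerivAt (fun y : ℝ => 2 * (y + 2)) 2 x := by
    simpa using ((hasDerivAt_id x).add_const 2).const_mul 2
  have h3 : HasDerivAt (fun y : ℝ => 2 * (y + 2) * (y * Real.log y - y + 1))
      (2 * (x * Real.log x - x + 1) + 2 * (x + 2) * (Real.log x + x * x⁻¹ - 1)) x :=
    h2.mul h1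
  have h4 : HasDerivAt (fun y : ℝ => 3 * (y - 1) ^ 2) (3 * (2 * (x - 1))) x := by
    have : HasDerivAt (fun y : ℝ => (y - 1) ^ 2) (2 * (x - 1) ^ 1 * 1) x :=
      (((hasDerivAt_id x).sub_const 1)).pow 2
    simpa [mul_comm, mul_assoc, mul_left_comm] using this.const_mul 3
  have hxinv : x * x⁻¹ = 1 := mul_inv_cancel₀ hx.ne'
  have := h3.sub h4
  have e : 4 * ((x + 1) * Real.log x - 2 * (x - 1)) = 2 * (x * Real.log x - x + 1) + 2 * (x + 2) * (Real.log x + x * x⁻¹ - 1) - 3 * (2 * (x - 1)) := by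
    rw [hxinv]; ring
  rw [e]; exact this

lemma Fk_nonneg {x : ℝ} (hx : 0 ≤ x) : 0 ≤ Fk x := by
  rcases eq_or_lt_of_le hx with h0 | hx0
  · simp [Fk, ← h0]; norm_num
  have hF1 : Fk 1 = 0 := by simp [Fk]
  rcases le_total 1 x with h1 | h1
  · have hmono : MonotoneOn Fk (Set.Icc 1 x) := by
      apply monotoneOn_of_deriv_nonneg (convex_Icc 1 x)
      · intro y hy
        exact ((Fk_hasDeriv (lt_of_lt_of_le one_pos hy.1)).continuousAt).continuousWithinAt
      · intro y hy
        rw [interior_Icc] at hy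
        exact ((Fk_hasDeriv (lt_trans one_pos hy.1)).differentiableAt).differentiableWithinAt
      · intro y hy
        rw [interior_Icc] at hy
        rw [(Fk_hasDeriv (lt_trans one_pos hy.1)).deriv]
        have := G_nonneg (le_of_lt hy.1)
        linarith
    have := hmono (Set.left_mem_Icc.2 h1) (Set.right_mem_Icc.2 h1) h1
    rw [hF1] at this; exact this
  · have hanti : AntitoneOn Fk (Set.Icc x 1) := by
      apply antitoneOn_of_deriv_nonpos (convex_Icc x 1)
      · intro y hy
        exact ((Fk_hasDeriv (lt_of_lt_of_le hx0 hy.1)).continuousAt).continuousWithinAt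
      · intro y hy
        rw [interior_Icc] at hy
        exact ((Fk_hasDeriv (lt_trans hx0 hy.1)).differentiableAt).differentiableWithinAt
      · intro y hy
        rw [interior_Icc] at hy
        have := G_nonpos (lt_trans hx0 hy.1) (le_of_lt hy.2)
        rw [(Fk_hasDeriv (lt_trans hx0 hy.1)).deriv]
        linarith
    have := hanti (Set.left_mem_Icc.2 h1) (Set.right_mem_Icc.2 h1) h1
    rw [hF1] at this; exact this

/-- Pointwise Pinsker-type inequality. -/
lemma pinsker_pointwise {x : ℝ} (hx : 0 ≤ x) :
    3 * (x - 1) ^ 2 ≤ 2 * (x + 2) * (x * Real.log x - x + 1) := by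
  have := Fk_nonneg hx
  unfold Fk at this; linarith

lemma xlogx_abs_le {x : ℝ} (h0 : 0 ≤ x) (h2 : x ≤ 2) : |x * Real.log x| ≤ 2 := by
  rcases eq_or_lt_of_le h0 with h | hx0
  · simp [← h]
  rcases le_total 1 x with h1 | h1
  · have hl0 : 0 ≤ Real.log x := Real.log_nonneg h1
    have hl : Real.log x ≤ x - 1 := Real.log_le_sub_one_of_pos hx0
    rw [abs_of_nonneg (by positivity)]
    nlinarith
  · have hl0 : Real.log x ≤ 0 := Real.log_nonpos h0 h1
    have hinv : Real.log x⁻¹ ≤ x⁻¹ - 1 := Real.log_le_sub_one_of_pos (inv_pos.2 hx0)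
    rw [Real.log_inv] at hinv
    have : -(x * Real.log x) ≤ 1 - x := by
      have := mul_le_mul_of_nonneg_left hinv (le_of_lt hx0)
      rw [mul_sub, mul_inv_cancel₀ hx0.ne'] at this
      linarith
    rw [abs_of_nonpos (mul_nonpos_of_nonneg_of_nonpos h0 hl0)]
    linarith

/-! ### Pinsker-type bound for bounded test functions -/

lemma pinsker_bound {α : Type*} [MeasurableSpace α] (P M : Measure α)
    [IsProbabilityMeasure P] [IsProbabilityMeasure M] (hPM : P ≪ M)
    (hb : ∀ᵐ x ∂M, P.rnDeriv M x ≤ 2)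
    (g : α → ℝ) (hg : Measurable g) (C : ℝ) (hC : 0 < C)
    (hg0 : ∀ x, 0 ≤ g x) (hgC : ∀ x, g x ≤ C) :
    (∫ x, g x ∂P - ∫ x, g x ∂M) ^ 2 ≤ C ^ 2 / 2 * klDiv P M := by
  set ρ : α → ℝ := fun x => (P.rnDeriv M x).toReal with hρdef
  have hρmeas : Measurable ρ := (Measure.measurable_rnDeriv P M).ennreal_toReal
  have hρ0 : ∀ x, 0 ≤ ρ x := fun x => ENNReal.toReal_nonneg
  have hρ2 : ∀ᵐ x ∂M, ρ x ≤ 2 := by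
    filter_upwards [hb] with x hx
    calc ρ x ≤ (2 : ℝ≥0∞).toReal := ENNReal.toReal_mono (by norm_num) hx
    _ = 2 := by norm_num
  have hρint : Integrable ρ M := Measure.integrable_toReal_rnDeriv
  have hρ1 : ∫ x, ρ x ∂M = 1 := by
    rw [hρdef, Measure.integral_toReal_rnDeriv hPM, probReal_univ]
  -- integrability from boundedness
  have hbdd : ∀ (u : α → ℝ), Measurable u → ∀ (B : ℝ), (∀ᵐ x ∂M, |u x| ≤ B) →
      Integrable u M := fun u hu B h =>
    Integrable.mono' (integrable_const B) hu.aestronglyMeasurable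
      (by simpa [Real.norm_eq_abs] using h)
  -- KL as integral over M
  have hKL : klDiv P M = ∫ x, ρ x * Real.log (ρ x) ∂M := by
    rw [klDiv, ← integral_rnDeriv_smul hPM (f := fun x => Real.log (ρ x))]
    simp [smul_eq_mul]
    rfl
  have I1 : Integrable (fun x => ρ x * Real.log (ρ x)) M := by
    refine hbdd _ (hρmeas.mul (Real.measurable_log.comp hρmeas)) 2 ?_
    filter_upwards [hρ2] with x hx
    exact xlogx_abs_le (hρ0 x) hx
  -- the quadratic lower bound function
  set q : α → ℝ := fun x => 3 * (ρ x - 1) ^ 2 / (2 * (ρ x + 2)) with hqdef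
  have hq0 : ∀ x, 0 ≤ q x := by
    intro x; have := hρ0 x; positivity
  have hqmeas : Measurable q := by
    apply Measurable.div
    · exact (((hρmeas.sub measurable_const).pow_const 2).const_mul 3)
    · exact ((hρmeas.add measurable_const).const_mul 2)
  have hqbd : ∀ᵐ x ∂M, |q x| ≤ 1 := by
    filter_upwards [hρ2] with x hx
    rw [abs_of_nonneg (hq0 x)]
    have h0 := hρ0 x
    rw [div_le_one (by positivity)]
    nlinarith
  have hqint : Integrable q M := hbdd _ hqmeas 1 hqbd
  have hqle : ∫ x, q x ∂M ≤ klDiv P M := by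
    rw [hKL]
    have hle : ∀ᵐ x ∂M, q x ≤ ρ x * Real.log (ρ x) - ρ x + 1 := by
      filter_upwards [] with x
      have h0 := hρ0 x
      rw [hqdef, div_le_iff₀ (by positivity)]
      have := pinsker_pointwise h0
      nlinarith
    have hint1 : Integrable (fun x => ρ x * Real.log (ρ x) - ρ x) M := I1.sub hρint
    have hint2 : Integrable (fun x => ρ x * Real.log (ρ x) - ρ x + 1) M :=
      hint1.add (integrable_const 1)
    calc ∫ x, q x ∂M ≤ ∫ x, (ρ x * Real.log (ρ x) - ρ x + 1) ∂M :=
          integral_mono_ae hqint hint2 hle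
      _ = ∫ x, ρ x * Real.log (ρ x) ∂M - ∫ x, ρ x ∂M + 1 := by
          rw [integral_add hint1 (integrable_const 1), integral_sub I1 hρint]
          simp
      _ = ∫ x, ρ x * Real.log (ρ x) ∂M := by rw [hρ1]; ring
  have hqnn : 0 ≤ ∫ x, q x ∂M := integral_nonneg hq0
  -- Cauchy-Schwarz
  have habs_bd : ∀ᵐ x ∂M, |ρ x - 1| ≤ 1 := by
    filter_upwards [hρ2] with x hx
    rw [abs_le]; constructor <;> [linarith [hρ0 x]; linarith]
  have habsint : Integrable (fun x => |ρ x - 1|) M :=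
    hbdd _ (hρmeas.sub measurable_const).abs 1 (by filter_upwards [habs_bd] with x hx; rwa [abs_abs])
  set u : α → ℝ := fun x => Real.sqrt (3 / (2 * (ρ x + 2))) * |ρ x - 1| with hudef
  set v : α → ℝ := fun x => Real.sqrt (2 * (ρ x + 2) / 3) with hvdef
  have humeas : Measurable u :=
    (Real.continuous_sqrt.measurable.comp
      (measurable_const.div ((hρmeas.add measurable_const).const_mul 2))).mul
      (hρmeas.sub measurable_const).abs
  have hvmeas : Measurable v :=
    Real.continuous_sqrt.measurable.comp
      (((hρmeas.add measurable_const).const_mul 2).div_const 3)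
  have hu0 : ∀ x, 0 ≤ u x := fun x => mul_nonneg (Real.sqrt_nonneg _) (abs_nonneg _)
  have hv0 : ∀ x, 0 ≤ v x := fun x => Real.sqrt_nonneg _
  have huv : ∀ x, u x * v x = |ρ x - 1| := by
    intro x
    have h0 := hρ0 x
    have : Real.sqrt (3 / (2 * (ρ x + 2))) * Real.sqrt (2 * (ρ x + 2) / 3) = 1 := by
      rw [← Real.sqrt_mul (by positivity)]
      rw [show 3 / (2 * (ρ x + 2)) * (2 * (ρ x + 2) / 3) = 1 by field_simp]
      exact Real.sqrt_one
    calc u x * v x = (Real.sqrt (3 / (2 * (ρ x + 2))) * Real.sqrt (2 * (ρ x + 2) / 3))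
          * |ρ x - 1| := by ring
      _ = |ρ x - 1| := by rw [this, one_mul]
  have hu2 : ∀ x, u x ^ 2 = q x := by
    intro x
    have h0 := hρ0 x
    rw [hudef, hqdef]
    rw [mul_pow, Real.sq_sqrt (by positivity), sq_abs]
    ring
  have hv2 : ∀ x, v x ^ 2 = 2 * (ρ x + 2) / 3 := fun x =>
    Real.sq_sqrt (by have := hρ0 x; positivity)
  have hvint2 : ∫ x, v x ^ 2 ∂M = 2 := by
    have : ∫ x, v x ^ 2 ∂M = ∫ x, ((2:ℝ)/3 * ρ x + 4/3) ∂M := by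
      apply integral_congr_ae
      filter_upwards [] with x
      rw [hv2 x]; ring
    rw [this, integral_add (hρint.const_mul ((2:ℝ)/3)) (integrable_const _),
      integral_const_mul, hρ1]
    simp [measure_univ]
    norm_num
  have humem : MemLp u (ENNReal.ofReal 2) M := by
    refine MemLp.of_bound humeas.aestronglyMeasurable 1 ?_
    filter_upwards [habs_bd] with x hx
    rw [Real.norm_eq_abs, abs_of_nonneg (hu0 x)]
    have h0 := hρ0 x
    have h1 : Real.sqrt (3 / (2 * (ρ x + 2))) ≤ 1 := by
      rw [show (1:ℝ) = Real.sqrt 1 by rw [Real.sqrt_one]]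
      apply Real.sqrt_le_sqrt
      rw [div_le_one (by positivity)]; linarith
    calc u x ≤ 1 * |ρ x - 1| := by
          rw [hudef]; exact mul_le_mul_of_nonneg_right h1 (abs_nonneg _)
      _ ≤ 1 := by rw [one_mul]; exact hx
  have hvmem : MemLp v (ENNReal.ofReal 2) M := by
    refine MemLp.of_bound hvmeas.aestronglyMeasurable 2 ?_
    filter_upwards [hρ2] with x hx
    rw [Real.norm_eq_abs, abs_of_nonneg (hv0 x)]
    rw [show (2:ℝ) = Real.sqrt 4 by rw [show (4:ℝ) = 2^2 by norm_num, Real.sqrt_sq (by norm_num)]]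
    apply Real.sqrt_le_sqrt
    linarith
  have hpq : Real.HolderConjugate 2 2 := Real.HolderConjugate.two_two
  have hCS := integral_mul_le_Lp_mul_Lq_of_nonneg hpq
    (Filter.Eventually.of_forall hu0) (Filter.Eventually.of_forall hv0) humem hvmem
  have hCS' : ∫ x, |ρ x - 1| ∂M ≤ Real.sqrt (∫ x, q x ∂M) * Real.sqrt 2 := by
    have e1 : ∫ a, u a * v a ∂M = ∫ x, |ρ x - 1| ∂M := by
      apply integral_congr_ae; filter_upwards [] with x; rw [huv x]
    simp only [Real.rpow_two] at hCS
    have e2 : ∫ a, u a ^ 2 ∂M = ∫ x, q x ∂M := by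
      apply integral_congr_ae; filter_upwards [] with x
      rw [hu2 x]
    rw [e1, e2, hvint2] at hCS
    calc ∫ x, |ρ x - 1| ∂M ≤ (∫ x, q x ∂M) ^ ((1:ℝ)/2) * (2:ℝ) ^ ((1:ℝ)/2) := hCS
      _ = Real.sqrt (∫ x, q x ∂M) * Real.sqrt 2 := by
          rw [← Real.sqrt_eq_rpow, ← Real.sqrt_eq_rpow]
  -- the difference of integrals
  have hgP : ∫ x, g x ∂P = ∫ x, ρ x * g x ∂M := by
    rw [← integral_rnDeriv_smul hPM (f := g)]
    simp [smul_eq_mul]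
    rfl
  have hgint : Integrable g M := hbdd _ hg C (Filter.Eventually.of_forall fun x => by
    rw [abs_of_nonneg (hg0 x)]; exact hgC x)
  have hρgint : Integrable (fun x => ρ x * g x) M := by
    refine hbdd _ (hρmeas.mul hg) (2 * C) ?_
    filter_upwards [hρ2] with x hx
    rw [abs_mul, abs_of_nonneg (hρ0 x), abs_of_nonneg (hg0 x)]
    exact mul_le_mul hx (hgC x) (hg0 x) (by norm_num)
  have hdiff : ∫ x, g x ∂P - ∫ x, g x ∂M = ∫ x, (ρ x - 1) * (g x - C / 2) ∂M := by
    have expand : ∀ x, (ρ x - 1) * (g x - C / 2) =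
        ρ x * g x - g x - C / 2 * ρ x + C / 2 := fun x => by ring
    rw [hgP]
    rw [integral_congr_ae (Filter.Eventually.of_forall expand)]
    have i1 : Integrable (fun x => ρ x * g x - g x) M := hρgint.sub hgint
    have i2 : Integrable (fun x => ρ x * g x - g x - C / 2 * ρ x) M :=
      i1.sub (hρint.const_mul (C / 2))
    rw [integral_add i2 (integrable_const _), integral_sub i1 (hρint.const_mul (C / 2)),
      integral_sub hρgint hgint, integral_const_mul, hρ1]
    simp [measure_univ]
  have hprodint : Integrable (fun x => (ρ x - 1) * (g x - C / 2)) M := by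
    refine hbdd _ ((hρmeas.sub measurable_const).mul (hg.sub measurable_const)) (3 * C) ?_
    filter_upwards [habs_bd] with x hx
    rw [abs_mul]
    have : |g x - C / 2| ≤ C := by
      rw [abs_le]; constructor <;> [linarith [hg0 x]; linarith [hgC x]]
    nlinarith [abs_nonneg (ρ x - 1), abs_nonneg (g x - C/2)]
  have habs : |∫ x, g x ∂P - ∫ x, g x ∂M| ≤ C / 2 * ∫ x, |ρ x - 1| ∂M := by
    rw [hdiff]
    have iabs : Integrable (fun x => |ρ x - 1| * |g x - C / 2|) M := by
      refine hbdd _ ((hρmeas.sub measurable_const).abs.mul (hg.sub measurable_const).abs) C ?_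
      filter_upwards [habs_bd] with x hx
      rw [abs_of_nonneg (mul_nonneg (abs_nonneg _) (abs_nonneg _))]
      have h2 : |g x - C / 2| ≤ C := by
        rw [abs_le]; constructor <;> [linarith [hg0 x]; linarith [hgC x]]
      nlinarith [abs_nonneg (ρ x - 1), abs_nonneg (g x - C / 2)]
    calc |∫ x, (ρ x - 1) * (g x - C / 2) ∂M| ≤ ∫ x, |ρ x - 1| * |g x - C / 2| ∂M := by
          simpa [Real.norm_eq_abs, abs_mul] using
            norm_integral_le_integral_norm (μ := M) (fun x => (ρ x - 1) * (g x - C / 2))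
      _ ≤ ∫ x, |ρ x - 1| * (C / 2) ∂M := by
          apply integral_mono_ae iabs (habsint.mul_const _)
          filter_upwards [] with x
          apply mul_le_mul_of_nonneg_left _ (abs_nonneg _)
          rw [abs_le]; constructor <;> [linarith [hg0 x]; linarith [hgC x]]
      _ = C / 2 * ∫ x, |ρ x - 1| ∂M := by rw [integral_mul_const]; ring
  -- combine
  have hfinal : |∫ x, g x ∂P - ∫ x, g x ∂M| ≤
      C / 2 * (Real.sqrt (∫ x, q x ∂M) * Real.sqrt 2) :=
    habs.trans (mul_le_mul_of_nonneg_left hCS' (by linarith))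
  have hr0 : 0 ≤ C / 2 * (Real.sqrt (∫ x, q x ∂M) * Real.sqrt 2) := by positivity
  calc (∫ x, g x ∂P - ∫ x, g x ∂M) ^ 2
      = |∫ x, g x ∂P - ∫ x, g x ∂M| ^ 2 := (sq_abs _).symm
    _ ≤ (C / 2 * (Real.sqrt (∫ x, q x ∂M) * Real.sqrt 2)) ^ 2 := by
        apply pow_le_pow_left₀ (abs_nonneg _) hfinal
    _ = C ^ 2 / 2 * ∫ x, q x ∂M := by
        rw [mul_pow, mul_pow, Real.sq_sqrt hqnn, Real.sq_sqrt (by norm_num : (0:ℝ) ≤ 2)]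
        ring
    _ ≤ C ^ 2 / 2 * klDiv P M := by
        apply mul_le_mul_of_nonneg_left hqle (by positivity)

/-! ### Properties of the midpoint measure -/

section mid
variable {α : Type*} [MeasurableSpace α]

lemma midM_prob (P Q : Measure α) [IsProbabilityMeasure P] [IsProbabilityMeasure Q] :
    IsProbabilityMeasure (midM P Q) := by
  constructor
  simp [midM, measure_univ]
  exact ENNReal.inv_two_add_inv_two

lemma midM_comm (P Q : Measure α) : midM P Q = midM Q P := by
  simp [midM, add_comm]

lemma ac_midM_left (P Q : Measure α) : P ≪ midM P Q := by
  intro s hs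
  simp only [midM, Measure.smul_apply, Measure.coe_add, Pi.add_apply, smul_eq_mul] at hs
  rcases mul_eq_zero.1 hs with h | h
  · exact absurd h (by norm_num)
  · exact (add_eq_zero.1 h).1

lemma rnDeriv_midM_le_two (P Q : Measure α) [IsProbabilityMeasure P] [IsProbabilityMeasure Q] :
    ∀ᵐ x ∂(midM P Q), P.rnDeriv (midM P Q) x ≤ 2 := by
  have : IsProbabilityMeasure (midM P Q) := midM_prob P Q
  have hle : ((2⁻¹ : ℝ≥0) • P : Measure α) ≤ midM P Q := by
    refine Measure.le_iff.2 fun s hs => ?_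
    simp only [midM, Measure.smul_apply, Measure.coe_add, Pi.add_apply, smul_eq_mul]
    rw [ENNReal.smul_def, show ((2⁻¹ : ℝ≥0) : ℝ≥0∞) = 2⁻¹ by simp]
    exact mul_le_mul_right le_self_add _
  have h1 := Measure.rnDeriv_le_one_of_le hle (ν := midM P Q)
  have h2 := Measure.rnDeriv_smul_left' P (midM P Q) (2⁻¹ : ℝ≥0)
  filter_upwards [h1, h2] with x hx1 hx2
  rw [hx2] at hx1
  simp only [Pi.smul_apply, Pi.one_apply] at hx1
  rw [ENNReal.smul_def, show ((2⁻¹ : ℝ≥0) : ℝ≥0∞) = 2⁻¹ by simp] at hx1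
  calc P.rnDeriv (midM P Q) x = 2 * (2⁻¹ * P.rnDeriv (midM P Q) x) := by
        rw [← mul_assoc, ENNReal.mul_inv_cancel (by norm_num) (by norm_num), one_mul]
    _ ≤ 2 * 1 := mul_le_mul_right hx1 2
    _ = 2 := mul_one 2

end mid

/-- single-domain accuracy transfer:
ε_{D_j}(f) ≤ ε_{D_i}(f) + √2·C·d_JS(P_{D_j}^{X,Y}, P_{D_i}^{X,Y}). -/
theorem stmt9 {𝒳 𝒴 Pred : Type*} [MeasurableSpace 𝒳] [MeasurableSpace 𝒴]
    [MeasurableSpace Pred]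
    (μi μj : Measure (𝒳 × 𝒴)) [IsProbabilityMeasure μi] [IsProbabilityMeasure μj]
    (L : Pred → 𝒴 → ℝ) (C : ℝ) (hC : 0 < C)
    (hL : Measurable (Function.uncurry L))
    (hL0 : ∀ p y, 0 ≤ L p y) (hLC : ∀ p y, L p y ≤ C)
    (f : 𝒳 → Pred) (hf : Measurable f) :
    ∫ p, L (f p.1) p.2 ∂μj
      ≤ ∫ p, L (f p.1) p.2 ∂μi + Real.sqrt 2 * C * jsDist μj μi := by
  set M : Measure (𝒳 × 𝒴) := midM μj μi with hM
  have hMprob : IsProbabilityMeasure M := midM_prob μj μi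
  set g : 𝒳 × 𝒴 → ℝ := fun p => L (f p.1) p.2 with hgdef
  have hgmeas : Measurable g :=
    hL.comp ((hf.comp measurable_fst).prodMk measurable_snd)
  have hg0 : ∀ p, 0 ≤ g p := fun p => hL0 _ _
  have hgC : ∀ p, g p ≤ C := fun p => hLC _ _
  -- integrability
  have hgint : ∀ (ν : Measure (𝒳 × 𝒴)) [IsProbabilityMeasure ν], Integrable g ν := by
    intro ν _
    refine Integrable.mono' (integrable_const C) hgmeas.aestronglyMeasurable ?_
    filter_upwards [] with p
    rw [Real.norm_eq_abs, abs_of_nonneg (hg0 p)]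
    exact hgC p
  -- mean over mixture
  have hm : ∫ p, g p ∂M = 2⁻¹ * ∫ p, g p ∂μj + 2⁻¹ * ∫ p, g p ∂μi := by
    rw [hM, midM, integral_smul_measure, integral_add_measure (hgint μj) (hgint μi)]
    simp [smul_eq_mul]
    ring
  -- Pinsker bounds for both components
  have hj := pinsker_bound μj M (ac_midM_left μj μi) (rnDeriv_midM_le_two μj μi)
    g hgmeas C hC hg0 hgC
  have hi : (∫ p, g p ∂μi - ∫ p, g p ∂M) ^ 2 ≤ C ^ 2 / 2 * klDiv μi M := by
    have hac : μi ≪ M := by rw [hM, midM_comm]; exact ac_midM_left μi μj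
    have hbd : ∀ᵐ x ∂M, μi.rnDeriv M x ≤ 2 := by
      rw [hM, midM_comm]; exact rnDeriv_midM_le_two μi μj
    exact pinsker_bound μi M hac hbd g hgmeas C hC hg0 hgC
  set a := ∫ p, g p ∂μj with ha
  set b := ∫ p, g p ∂μi with hb
  set m := ∫ p, g p ∂M with hmm
  set kj := klDiv μj M with hkj
  set ki := klDiv μi M with hki
  have hjsd : jsDiv μj μi = 2⁻¹ * kj + 2⁻¹ * ki := rfl
  have e1 : (a - b) ^ 2 = 4 * (a - m) ^ 2 := by rw [hm]; ring
  have e2 : (a - b) ^ 2 = 4 * (b - m) ^ 2 := by rw [hm]; ring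
  have ht : (a - b) ^ 2 ≤ 2 * C ^ 2 * jsDiv μj μi := by
    rw [hjsd]
    nlinarith [hj, hi, e1, e2]
  have hC2 : (0:ℝ) < C ^ 2 / 2 := by positivity
  have hkj0 : 0 ≤ kj := by
    have h2 : 0 ≤ C ^ 2 / 2 * kj := le_trans (sq_nonneg _) hj
    exact nonneg_of_mul_nonneg_right h2 hC2
  have hki0 : 0 ≤ ki := by
    have h2 : 0 ≤ C ^ 2 / 2 * ki := le_trans (sq_nonneg _) hi
    exact nonneg_of_mul_nonneg_right h2 hC2
  have hjs0 : 0 ≤ jsDiv μj μi := by rw [hjsd]; linarith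
  have hR : (Real.sqrt 2 * C * Real.sqrt (jsDiv μj μi)) ^ 2 = 2 * C ^ 2 * jsDiv μj μi := by
    rw [mul_pow, mul_pow, Real.sq_sqrt (by norm_num : (0:ℝ) ≤ 2), Real.sq_sqrt hjs0]
  have hfin : a - b ≤ Real.sqrt 2 * C * Real.sqrt (jsDiv μj μi) := by
    calc a - b ≤ |a - b| := le_abs_self _
      _ = Real.sqrt ((a - b) ^ 2) := (Real.sqrt_sq_eq_abs _).symm
      _ ≤ Real.sqrt ((Real.sqrt 2 * C * Real.sqrt (jsDiv μj μi)) ^ 2) := by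
          apply Real.sqrt_le_sqrt; rw [hR]; exact ht
      _ = Real.sqrt 2 * C * Real.sqrt (jsDiv μj μi) := Real.sqrt_sq (by positivity)
  have : jsDist μj μi = Real.sqrt (jsDiv μj μi) := rfl
  rw [this]
  linarith
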